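/- Let l < 0 < u and suppose d ∈ [0, u] satisfies the tangency condition tanh(d) − tanh(l) = (1 − tanh(d)²)(d − l). Then for every y ∈ [l, u], tanh(y) ≤ tanh(l) + (1 − tanh(d)²)(y − l); that is, the line through the left endpoint (l, tanh(l)) with slope tanh'(d) is an upper bound for tanh on [l, u]. -/

import Mathlib

open Real

lemma tanh_hasDerivAt (x : ℝ) :
    HasDerivAt Real.tanh (1 - Real.tanh x ^ 2) x := by
  have hc : Real.cosh x ≠ 0 := (Real.cosh_pos x).ne'
  have h : HasDerivAt (fun y => Real.sinh y / Real.cosh y)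
      ((Real.cosh x * Real.cosh x - Real.sinh x * Real.sinh x) / Real.cosh x ^ 2) x :=
    (Real.hasDerivAt_sinh x).div (Real.hasDerivAt_cosh x) hc
  have heq : (Real.cosh x * Real.cosh x - Real.sinh x * Real.sinh x) / Real.cosh x ^ 2
      = 1 - Real.tanh x ^ 2 := by
    rw [Real.tanh_eq_sinh_div_cosh, div_pow]
    field_simp
  rw [heq] at h
  exact h.congr_of_eventuallyEq (by filter_upwards with y using (Real.tanh_eq_sinh_div_cosh y))

lemma tanh_sq_lt_one (x : ℝ) : Real.tanh x ^ 2 < 1 := by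
  rw [Real.tanh_eq_sinh_div_cosh, div_pow, div_lt_one (by positivity)]
  nlinarith [Real.cosh_sq_sub_sinh_sq x, Real.cosh_pos x]

lemma tanh_strictMono : StrictMono Real.tanh :=
  strictMono_of_deriv_pos fun x => by
    rw [(tanh_hasDerivAt x).deriv]
    nlinarith [_root_.tanh_sq_lt_one x]

lemma tanh_sq_eq_abs (x : ℝ) : Real.tanh x ^ 2 = Real.tanh |x| ^ 2 := by
  rcases abs_cases x with ⟨h, _⟩ | ⟨h, _⟩
  · rw [h]
  · rw [h, Real.tanh_neg, neg_sq]

lemma tanh_nonneg {x : ℝ} (hx : 0 ≤ x) : 0 ≤ Real.tanh x := by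
  have := tanh_strictMono.monotone hx
  rwa [Real.tanh_zero] at this

lemma tanh_sq_le_tanh_sq {a b : ℝ} (hb : 0 ≤ b) (h : |a| ≤ b) :
    Real.tanh a ^ 2 ≤ Real.tanh b ^ 2 := by
  rw [tanh_sq_eq_abs a]
  exact pow_le_pow_left₀ (tanh_nonneg (abs_nonneg a)) (tanh_strictMono.monotone h) 2

lemma tanh_sq_ge_tanh_sq {a b : ℝ} (hb : 0 ≤ b) (h : b ≤ |a|) :
    Real.tanh b ^ 2 ≤ Real.tanh a ^ 2 := by
  rw [tanh_sq_eq_abs a]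
  exact pow_le_pow_left₀ (tanh_nonneg hb) (tanh_strictMono.monotone h) 2

/-- CROWN linear upper bound for an unstable tanh neuron (`l < 0 < u`): the line through the
left endpoint `(l, tanh l)` with slope `tanh' d = 1 - tanh d ^ 2`, where `d ∈ [0, u]` is the
tangency point, is an upper bound for `tanh` on `[l, u]`. -/
theorem tanh_crown_upper_unstable (l u d : ℝ) (hl : l < 0) (hu : 0 < u)
    (hd : d ∈ Set.Icc 0 u)
    (htangent : Real.tanh d - Real.tanh l = (1 - Real.tanh d ^ 2) * (d - l)) :
    ∀ y ∈ Set.Icc l u,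
      Real.tanh y ≤ Real.tanh l + (1 - Real.tanh d ^ 2) * (y - l) := by
  obtain ⟨hd0, hdu⟩ := hd
  set s : ℝ := 1 - Real.tanh d ^ 2 with hs
  set g : ℝ → ℝ := fun y => Real.tanh l + s * (y - l) - Real.tanh y with hg
  have hderiv : ∀ x : ℝ, HasDerivAt g (Real.tanh x ^ 2 - Real.tanh d ^ 2) x := by
    intro x
    have h1 : HasDerivAt (fun y => Real.tanh l + s * (y - l)) s x := by
      simpa using ((hasDerivAt_id x).sub_const l).const_mul s |>.const_add (Real.tanh l)
    have := h1.sub (tanh_hasDerivAt x)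
    exact this.congr_deriv (by rw [hs]; ring)
  have hdiff : ∀ x : ℝ, DifferentiableAt ℝ g x := fun x => (hderiv x).differentiableAt
  have hgd : g d = 0 := by simp only [hg]; linarith
  have hgl : g l = 0 := by simp [hg]
  have hcont : Continuous g := by
    refine Differentiable.continuous fun x => hdiff x
  intro y ⟨hyl, hyu⟩
  have key : 0 ≤ g y := by
    rcases le_or_gt d y with hcase | hcase
    · -- y ≥ d : g monotone on [d, u]
      have hmono : MonotoneOn g (Set.Icc d u) := by
        apply monotoneOn_of_deriv_nonneg (convex_Icc d u) hcont.continuousOn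
          (fun x _ => (hdiff x).differentiableWithinAt)
        intro x hx
        rw [interior_Icc] at hx
        rw [(hderiv x).deriv]
        have : Real.tanh d ^ 2 ≤ Real.tanh x ^ 2 :=
          tanh_sq_ge_tanh_sq hd0 (le_trans hx.1.le (le_abs_self x))
        linarith
      have := hmono ⟨le_refl d, hdu⟩ ⟨hcase, hyu⟩ hcase
      rw [hgd] at this; exact this
    · rcases le_or_gt (-d) y with hcase2 | hcase2
      · -- -d ≤ y ≤ d : g antitone on [-d, d]
        have hmono : AntitoneOn g (Set.Icc (-d) d) := by
          apply antitoneOn_of_deriv_nonpos (convex_Icc _ _) hcont.continuousOn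
            (fun x _ => (hdiff x).differentiableWithinAt)
          intro x hx
          rw [interior_Icc] at hx
          rw [(hderiv x).deriv]
          have : Real.tanh x ^ 2 ≤ Real.tanh d ^ 2 :=
            tanh_sq_le_tanh_sq hd0 (abs_le.mpr ⟨hx.1.le, hx.2.le⟩)
          linarith
        have := hmono ⟨hcase2, hcase.le⟩ ⟨neg_le_self hd0, le_refl d⟩ hcase.le
        rw [hgd] at this; exact this
      · -- l ≤ y ≤ -d : g monotone on [l, -d]
        have hmono : MonotoneOn g (Set.Icc l (-d)) := by
          apply monotoneOn_of_deriv_nonneg (convex_Icc _ _) hcont.continuousOn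
            (fun x _ => (hdiff x).differentiableWithinAt)
          intro x hx
          rw [interior_Icc] at hx
          rw [(hderiv x).deriv]
          have hxd : d ≤ |x| := by
            rw [abs_of_nonpos (by linarith [hx.2])]
            linarith [hx.2]
          have := tanh_sq_ge_tanh_sq hd0 hxd
          linarith
        have := hmono ⟨le_refl l, by linarith⟩ ⟨hyl, hcase2.le⟩ hyl
        rw [hgl] at this; exact this
  simp only [hg] at key
  linarith
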